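/- arXiv:1410.3452 — 2 statements merged into one kernel-verified Lean document; each statement's English description precedes it below -/
import Mathlib

section
/- Let X be a real linear Polish space, D ⊆ X a nonempty open convex set, and V ⊆ D a D-measurable midpoint convex set. Then the set of all ℚ₂-internal points of V is open. -/
open Set Pointwise MeasureTheory

/-- A set is Haar meager (Darji) if it is contained in a Borel set `B` such that some
continuous map from a nonempty compact metric space pulls back every translate of `B`
to a meager set. -/
def HaarMeager {X : Type*} [AddCommGroup X] [TopologicalSpace X] (A : Set X) : Prop :=
  ∃ B : Set X, A ⊆ B ∧ MeasurableSet[borel X] B ∧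
    ∃ (K : Type) (_ : MetricSpace K) (_ : CompactSpace K) (_ : Nonempty K) (f : K → X),
      Continuous f ∧ ∀ x : X, IsMeagre (f ⁻¹' (B + {x}))

/-- A set is D-measurable if it is the union of a Borel set and a Haar meager set. -/
def DMeasurable {X : Type*} [AddCommGroup X] [TopologicalSpace X] (A : Set X) : Prop :=
  ∃ B M : Set X, MeasurableSet[borel X] B ∧ HaarMeager M ∧ A = B ∪ M

/-- Dyadic rationals. -/
def Q2 : Set ℝ := {ρ | ∃ n m : ℤ, ρ = (n : ℝ) / 2 ^ m}

/-- `x₀` is a `ℚ₂`-internal point of `V`. -/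
def Q2Internal {X : Type*} [AddCommGroup X] [Module ℝ X] (V : Set X) (x₀ : X) : Prop :=
  x₀ ∈ V ∧ ∀ x : X, ∃ ε > (0 : ℝ), ∀ ρ ∈ Q2, ρ ∈ Set.Ioo (-ε) ε → x₀ + ρ • x ∈ V

open Set Topology Filter TopologicalSpace

section KU

variable {α β : Type*} [TopologicalSpace α] [TopologicalSpace β]

lemma isNowhereDense_mono {s t : Set β} (hst : s ⊆ t) (ht : IsNowhereDense t) :
    IsNowhereDense s := by
  rw [IsNowhereDense, ← subset_empty_iff]
  calc interior (closure s) ⊆ interior (closure t) := interior_mono (closure_mono hst)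
  _ = ∅ := ht

/-- Core Kuratowski–Ulam lemma: slices of a dense open set are residually dense. -/
lemma residual_dense_slices [SecondCountableTopology β]
    {W : Set (α × β)} (hW : IsOpen W) (hWd : Dense W) :
    {a : α | Dense {b | (a, b) ∈ W}} ∈ residual α := by
  rw [mem_residual_iff]
  refine ⟨(fun s => {a : α | ∃ y ∈ s, (a, y) ∈ W}) '' countableBasis β, ?_, ?_, ?_, ?_⟩
  · rintro t ⟨s, hs, rfl⟩
    show IsOpen {a : α | ∃ y ∈ s, (a, y) ∈ W}
    have : {a : α | ∃ y ∈ s, (a, y) ∈ W} = ⋃ y ∈ s, {a : α | (a, y) ∈ W} := by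
      ext a; simp
    rw [this]
    exact isOpen_biUnion fun y _ => hW.preimage (Continuous.prodMk_left y)
  · rintro t ⟨s, hs, rfl⟩
    have hsne : s.Nonempty := by
      rcases eq_empty_or_nonempty s with rfl | h
      · exact absurd hs (empty_notMem_countableBasis β)
      · exact h
    rw [dense_iff_inter_open]
    rintro A hA ⟨a₀, ha₀⟩
    have hne : (A ×ˢ s).Nonempty := ⟨(a₀, hsne.choose), ha₀, hsne.choose_spec⟩
    obtain ⟨⟨a, y⟩, hpU, hpW⟩ :=
      hWd.inter_open_nonempty _ (hA.prod ((isBasis_countableBasis β).isOpen hs)) hne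
    exact ⟨a, hpU.1, y, hpU.2, hpW⟩
  · exact (countable_countableBasis β).image _
  · rintro a ha
    rw [mem_setOf_eq, dense_iff_inter_open]
    rintro O hO ⟨b₀, hb₀⟩
    obtain ⟨s, hs, hb₀s, hsO⟩ := (isBasis_countableBasis β).exists_subset_of_mem_open hb₀ hO
    obtain ⟨y, hys, hyW⟩ := ha _ ⟨s, hs, rfl⟩
    exact ⟨y, hsO hys, hyW⟩

/-- Slices of a nowhere dense set are residually nowhere dense. -/
lemma residual_isNowhereDense_slices [SecondCountableTopology β]
    {F : Set (α × β)} (hF : IsNowhereDense F) :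
    {a : α | IsNowhereDense {b | (a, b) ∈ F}} ∈ residual α := by
  have hCc : IsClosed (closure F) := isClosed_closure
  have hWd : Dense (closure F)ᶜ := by
    rw [← interior_eq_empty_iff_dense_compl]
    rwa [IsNowhereDense] at hF
  filter_upwards [residual_dense_slices hCc.isOpen_compl hWd] with a ha
  have hclosed : IsClosed {b | (a, b) ∈ closure F} := hCc.preimage (Continuous.prodMk_right a)
  refine isNowhereDense_mono (t := {b | (a, b) ∈ closure F})
    (fun b hb => subset_closure (s := F) hb) ?_
  rw [hclosed.isNowhereDense_iff, interior_eq_empty_iff_dense_compl]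
  exact ha

/-- Slices of a meagre set are residually meagre. -/
lemma residual_isMeagre_slices [SecondCountableTopology β]
    {S : Set (α × β)} (hS : IsMeagre S) :
    {a : α | IsMeagre {b | (a, b) ∈ S}} ∈ residual α := by
  obtain ⟨𝒮, h𝒮nwd, h𝒮c, h𝒮sub⟩ := isMeagre_iff_countable_union_isNowhereDense.mp hS
  have key : ∀ t ∈ 𝒮, {a : α | IsNowhereDense {b | (a, b) ∈ t}} ∈ residual α :=
    fun t ht => residual_isNowhereDense_slices (h𝒮nwd t ht)
  have : (⋂ t ∈ 𝒮, {a : α | IsNowhereDense {b | (a, b) ∈ t}}) ∈ residual α :=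
    (countable_bInter_mem h𝒮c).mpr key
  filter_upwards [this] with a ha
  rw [isMeagre_iff_countable_union_isNowhereDense]
  refine ⟨(fun t => {b : β | (a, b) ∈ t}) '' 𝒮, ?_, h𝒮c.image _, ?_⟩
  · rintro u ⟨t, ht, rfl⟩
    exact (mem_iInter₂.mp ha) t ht
  · intro b hb
    obtain ⟨t, ht, hbt⟩ := h𝒮sub hb
    exact ⟨{b : β | (a, b) ∈ t}, ⟨t, ht, rfl⟩, hbt⟩

lemma IsMeagre.union' {s t : Set α} (hs : IsMeagre s) (ht : IsMeagre t) : IsMeagre (s ∪ t) := by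
  rw [IsMeagre, compl_union]
  exact Filter.inter_mem hs ht

lemma not_isMeagre_of_isOpen_nonempty [BaireSpace α] {A : Set α} (hA : IsOpen A)
    (hne : A.Nonempty) : ¬ IsMeagre A := by
  intro h
  obtain ⟨x, hx1, hx2⟩ := (dense_of_mem_residual h).inter_open_nonempty A hA hne
  exact hx2 hx1

/-- Kuratowski–Ulam, "sections to whole" direction. -/
lemma isMeagre_of_slices [SecondCountableTopology α] [BaireSpace α] [BaireSpace β]
    {S : Set (α × β)} (hBM : BaireMeasurableSet S)
    (h : ∀ b : β, IsMeagre {a | (a, b) ∈ S}) : IsMeagre S := by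
  obtain ⟨U, hUo, hUeq⟩ := hBM.residualEq_isOpen
  set M := {p : α × β | (p ∈ S) = (p ∈ U)}ᶜ with hMdef
  have hM : IsMeagre M := by
    rw [IsMeagre, compl_compl]; exact hUeq
  have hU_empty : U = ∅ := by
    by_contra hne
    obtain ⟨⟨a₀, b₀⟩, hab⟩ := nonempty_iff_ne_empty.mpr hne
    obtain ⟨A, Bo, hA, hBo, ha₀, hb₀, hABU⟩ := isOpen_prod_iff.mp hUo a₀ b₀ hab
    have hM' : IsMeagre (Prod.swap ⁻¹' M : Set (β × α)) :=
      hM.preimage_of_isOpenMap continuous_swap (Homeomorph.prodComm β α).isOpenMap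
    have hres := residual_isMeagre_slices (α := β) (β := α) hM'
    obtain ⟨b, hbres, hbBo⟩ :=
      (dense_of_mem_residual hres).inter_open_nonempty Bo hBo ⟨b₀, hb₀⟩
    have hslice : IsMeagre {a : α | (a, b) ∈ M} := hbBo
    have hsubA : A ⊆ {a : α | (a, b) ∈ S} ∪ {a : α | (a, b) ∈ M} := by
      intro a haA
      by_cases hs : (a, b) ∈ S
      · exact Or.inl hs
      · right
        have hU : (a, b) ∈ U := hABU ⟨haA, hbres⟩
        simp only [hMdef, mem_compl_iff, mem_setOf_eq, eq_iff_iff]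
        intro hiff; exact hs (hiff.mpr hU)
    exact not_isMeagre_of_isOpen_nonempty hA ⟨a₀, ha₀⟩ (((h b).union' hslice).mono hsubA)
  have hsub : S ⊆ M := by
    intro p hp
    simp only [hMdef, hU_empty, mem_compl_iff, mem_setOf_eq, eq_iff_iff, not_iff]
    simp [hp]
  exact hM.mono hsub

end KU

section Main

open Topology Filter

lemma HaarMeager.isMeagre {X : Type*} [AddCommGroup X] [TopologicalSpace X]
    [IsTopologicalAddGroup X] [PolishSpace X] {A : Set X} (h : HaarMeager A) : IsMeagre A := by
  obtain ⟨B, hAB, hBmeas, K, _, _, _, f, hf, hmeag⟩ := h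
  haveI : BaireSpace X := by letI := upgradeIsCompletelyMetrizable X; infer_instance
  letI : MeasurableSpace X := borel X
  haveI : BorelSpace X := ⟨rfl⟩
  letI : MeasurableSpace K := borel K
  haveI : BorelSpace K := ⟨rfl⟩
  set S : Set (K × X) := (fun p : K × X => f p.1 - p.2) ⁻¹' B with hSdef
  have hcont : Continuous fun p : K × X => f p.1 - p.2 :=
    (hf.comp continuous_fst).sub continuous_snd
  have hSBM : BaireMeasurableSet S := (hcont.measurable hBmeas).baireMeasurableSet
  have hslices : ∀ z : X, IsMeagre {k : K | (k, z) ∈ S} := by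
    intro z
    have he : {k : K | (k, z) ∈ S} = f ⁻¹' (B + {z}) := by
      ext k
      simp [hSdef, Set.add_singleton, sub_eq_iff_eq_add, sub_eq_add_neg]
    rw [he]; exact hmeag z
  have hSm : IsMeagre S := isMeagre_of_slices hSBM hslices
  have hres := residual_isMeagre_slices (α := K) (β := X) hSm
  obtain ⟨k, hk⟩ := (dense_of_mem_residual hres).nonempty
  have hk' : IsMeagre {z : X | f k - z ∈ B} := hk
  have hBm : IsMeagre B := by
    have heq : B = (fun z : X => f k - z) ⁻¹' {z : X | f k - z ∈ B} := by
      ext z; simp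
    have hopen : IsOpenMap (fun z : X => f k - z) := by
      have hfun : (fun z : X => f k - z) =
          ⇑((Homeomorph.neg X).trans (Homeomorph.addLeft (f k))) := by
        funext z
        simp [Homeomorph.trans_apply, sub_eq_add_neg]
      rw [hfun]
      exact Homeomorph.isOpenMap _
    rw [heq]
    exact hk'.preimage_of_isOpenMap (continuous_const.sub continuous_id') hopen
  exact hBm.mono hAB

/-- Pettis-type theorem: a nonmeagre Baire measurable set `W` satisfies that `W - W` is a
neighborhood of `0`. -/
lemma pettis {X : Type*} [AddCommGroup X] [TopologicalSpace X] [IsTopologicalAddGroup X]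
    [BaireSpace X] {W : Set X} (hBM : BaireMeasurableSet W) (hnm : ¬ IsMeagre W) :
    ∃ U : Set X, IsOpen U ∧ (0 : X) ∈ U ∧ ∀ z ∈ U, ∃ w₁ ∈ W, ∃ w₂ ∈ W, z = w₁ - w₂ := by
  obtain ⟨U₀, hU₀o, hU₀eq⟩ := hBM.residualEq_isOpen
  set R := {x : X | (x ∈ W) = (x ∈ U₀)} with hRdef
  have hMm : IsMeagre Rᶜ := by rw [IsMeagre, compl_compl]; exact hU₀eq
  have hU₀ne : U₀.Nonempty := by
    rcases eq_empty_or_nonempty U₀ with rfl | h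
    · exfalso
      refine hnm (hMm.mono ?_)
      intro x hx
      simp only [hRdef, mem_compl_iff, mem_setOf_eq, eq_iff_iff]
      simp [hx]
    · exact h
  refine ⟨{z : X | ∃ u₁ ∈ U₀, ∃ u₂ ∈ U₀, z = u₁ - u₂}, ?_, ?_, ?_⟩
  · have : {z : X | ∃ u₁ ∈ U₀, ∃ u₂ ∈ U₀, z = u₁ - u₂} =
        ⋃ u₂ ∈ U₀, (fun u₁ => u₁ - u₂) '' U₀ := by
      ext z
      simp only [mem_setOf_eq, mem_iUnion, mem_image]
      constructor
      · rintro ⟨u₁, h₁, u₂, h₂, rfl⟩; exact ⟨u₂, h₂, u₁, h₁, rfl⟩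
      · rintro ⟨u₂, h₂, u₁, h₁, rfl⟩; exact ⟨u₁, h₁, u₂, h₂, rfl⟩
    rw [this]
    exact isOpen_biUnion fun u₂ _ => (Homeomorph.subRight u₂).isOpenMap _ hU₀o
  · obtain ⟨u, hu⟩ := hU₀ne
    exact ⟨u, hu, u, hu, (sub_self u).symm⟩
  · rintro z ⟨u₁, h₁, u₂, h₂, rfl⟩
    set zv := u₁ - u₂ with hzv
    have hT : IsOpen (U₀ ∩ (fun x => x + zv) '' U₀) :=
      hU₀o.inter ((Homeomorph.addRight zv).isOpenMap _ hU₀o)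
    have hTne : (U₀ ∩ (fun x => x + zv) '' U₀).Nonempty := by
      refine ⟨u₁, h₁, u₂, h₂, ?_⟩
      simp [hzv]
    have himg : IsMeagre ((fun x => x + zv) '' Rᶜ) := by
      have : (fun x => x + zv) '' Rᶜ = (fun x => x - zv) ⁻¹' Rᶜ := by
        ext x
        simp only [mem_image, mem_preimage]
        constructor
        · rintro ⟨y, hy, rfl⟩; simpa using hy
        · intro hx; exact ⟨x - zv, hx, by abel⟩
      rw [this]
      exact hMm.preimage_of_isOpenMap (continuous_id.sub continuous_const)
        (Homeomorph.subRight zv).isOpenMap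
    have hbig : ((U₀ ∩ (fun x => x + zv) '' U₀) \ (Rᶜ ∪ (fun x => x + zv) '' Rᶜ)).Nonempty := by
      have hmeag : IsMeagre (Rᶜ ∪ (fun x => x + zv) '' Rᶜ) := hMm.union' himg
      have hd : Dense (Rᶜ ∪ (fun x => x + zv) '' Rᶜ)ᶜ := dense_of_mem_residual hmeag
      obtain ⟨x, hx1, hx2⟩ := hd.inter_open_nonempty _ hT hTne
      exact ⟨x, hx1, fun hmem => hx2 hmem⟩
    obtain ⟨x, ⟨hxU₀, u, huU₀, hux⟩, hxgood⟩ := hbig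
    have hxW : x ∈ W := by
      have hxR : x ∈ R := by
        by_contra hc
        exact hxgood (Or.inl hc)
      rw [hRdef] at hxR
      simp only [mem_setOf_eq, eq_iff_iff] at hxR
      exact hxR.mpr hxU₀
    have huW : u ∈ W := by
      have huR : u ∈ R := by
        by_contra hc
        exact hxgood (Or.inr ⟨u, hc, hux⟩)
      rw [hRdef] at huR
      simp only [mem_setOf_eq, eq_iff_iff] at huR
      exact huR.mpr huU₀
    refine ⟨x, hxW, u, huW, ?_⟩
    have hb : (fun x => x + zv) u = u + zv := rfl
    rw [← hux, hb]
    abel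

end Main

theorem isOpen_q2Internal_points
    (X : Type*) [AddCommGroup X] [Module ℝ X] [TopologicalSpace X]
    [IsTopologicalAddGroup X] [ContinuousSMul ℝ X] [PolishSpace X]
    (D : Set X) (hD : IsOpen D) (hDc : Convex ℝ D) (hDne : D.Nonempty)
    (V : Set X) (hVD : V ⊆ D) (hV : DMeasurable V)
    (hmid : ∀ v₁ ∈ V, ∀ v₂ ∈ V, (1 / 2 : ℝ) • (v₁ + v₂) ∈ V) :
    IsOpen {x₀ : X | Q2Internal V x₀} := by
  have key : {x₀ : X | Q2Internal V x₀} = interior V := by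
    ext x₀
    simp only [mem_setOf_eq]
    constructor
    · rintro ⟨hx₀V, hint⟩
      haveI : BaireSpace X := by letI := upgradeIsCompletelyMetrizable X; infer_instance
      letI : MeasurableSpace X := borel X
      haveI : BorelSpace X := ⟨rfl⟩
      obtain ⟨B, M, hB, hM, hVeq⟩ := hV
      have hVBM : BaireMeasurableSet V := by
        rw [hVeq]
        exact hB.baireMeasurableSet.union hM.isMeagre.baireMeasurableSet
      set W : Set X := {w : X | x₀ + w ∈ V ∧ x₀ - w ∈ V} with hWdef
      have hWBM : BaireMeasurableSet W := by
        have h1 : BaireMeasurableSet ((fun w : X => x₀ + w) ⁻¹' V) :=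
          hVBM.preimage (continuous_const.add continuous_id')
            (Homeomorph.addLeft x₀).isOpenMap
        have h2 : BaireMeasurableSet ((fun w : X => x₀ - w) ⁻¹' V) := by
          have hopen : IsOpenMap (fun w : X => x₀ - w) := by
            have hfun : (fun w : X => x₀ - w) =
                ⇑((Homeomorph.neg X).trans (Homeomorph.addLeft x₀)) := by
              funext w
              simp [Homeomorph.trans_apply, sub_eq_add_neg]
            rw [hfun]
            exact Homeomorph.isOpenMap _
          exact hVBM.preimage (continuous_const.sub continuous_id') hopen
        exact h1.inter h2
      have hcov : ∀ x : X, ∃ n : ℕ, ((1 : ℝ) / 2) ^ n • x ∈ W := by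
        intro x
        obtain ⟨ε, hε, hρ⟩ := hint x
        obtain ⟨n, hn⟩ : ∃ n : ℕ, ((1 : ℝ) / 2) ^ n < ε :=
          exists_pow_lt_of_lt_one hε (by norm_num)
        have hpos : (0 : ℝ) < ((1 : ℝ) / 2) ^ n := by positivity
        refine ⟨n, ?_, ?_⟩
        · exact hρ _ ⟨1, n, by rw [zpow_natCast, div_pow, one_pow]; norm_num⟩
            ⟨by linarith, hn⟩
        · have hneg := hρ (-(((1 : ℝ) / 2) ^ n))
            ⟨-1, n, by rw [zpow_natCast, div_pow, one_pow]; push_cast; ring⟩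
            ⟨by linarith, by linarith⟩
          rwa [neg_smul, ← sub_eq_add_neg] at hneg
      have hWnm : ¬ IsMeagre W := by
        intro hWm
        have hcover : (univ : Set X) ⊆ ⋃ n : ℕ, (fun w : X => ((2 : ℝ) ^ n) • w) '' W := by
          intro x _
          obtain ⟨n, hn⟩ := hcov x
          refine mem_iUnion.mpr ⟨n, ((1 : ℝ) / 2) ^ n • x, hn, ?_⟩
          show (2 : ℝ) ^ n • ((1 : ℝ) / 2) ^ n • x = x
          rw [smul_smul, ← mul_pow]
          norm_num
        have hmeag : IsMeagre (⋃ n : ℕ, (fun w : X => ((2 : ℝ) ^ n) • w) '' W) := by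
          refine isMeagre_iUnion fun n => ?_
          have hc : ((2 : ℝ) ^ n) ≠ 0 := by positivity
          have himg : (fun w : X => ((2 : ℝ) ^ n) • w) '' W =
              (fun w : X => ((2 : ℝ) ^ n)⁻¹ • w) ⁻¹' W := by
            ext y
            simp only [mem_image, mem_preimage]
            constructor
            · rintro ⟨w, hw, rfl⟩; rwa [inv_smul_smul₀ hc]
            · intro hy; exact ⟨_, hy, smul_inv_smul₀ hc y⟩
          rw [himg]
          exact hWm.preimage_of_isOpenMap (continuous_const_smul _)
            (isOpenMap_smul₀ (inv_ne_zero hc))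
        have huniv : IsMeagre (univ : Set X) := hmeag.mono hcover
        have : Dense (∅ : Set X) := by
          have h := dense_of_mem_residual (by rwa [IsMeagre, compl_univ] at huniv)
          simpa using h
        obtain ⟨y, hy⟩ := this.nonempty
        exact hy
      obtain ⟨U, hUo, hU0, hUsub⟩ := pettis hWBM hWnm
      rw [mem_interior]
      refine ⟨(fun u : X => x₀ + (1 / 2 : ℝ) • u) '' U, ?_, ?_, ?_⟩
      · rintro v ⟨u, huU, rfl⟩
        obtain ⟨w₁, hw₁, w₂, hw₂, rfl⟩ := hUsub u huU
        have hv₁ : x₀ + w₁ ∈ V := hw₁.1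
        have hv₂ : x₀ - w₂ ∈ V := hw₂.2
        have hmem := hmid _ hv₁ _ hv₂
        have harith : (1 / 2 : ℝ) • ((x₀ + w₁) + (x₀ - w₂)) = x₀ + (1 / 2 : ℝ) • (w₁ - w₂) := by
          rw [show (x₀ + w₁ + (x₀ - w₂)) = (2 : ℝ) • x₀ + (w₁ - w₂) by rw [two_smul]; abel,
            smul_add, smul_smul, show (1 / 2 : ℝ) * 2 = 1 by norm_num, one_smul]
        rwa [harith] at hmem
      · have hopen : IsOpenMap (fun u : X => x₀ + (1 / 2 : ℝ) • u) := by
          have : (fun u : X => x₀ + (1 / 2 : ℝ) • u) =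
              (fun v : X => x₀ + v) ∘ (fun u : X => (1 / 2 : ℝ) • u) := rfl
          rw [this]
          exact (Homeomorph.addLeft x₀).isOpenMap.comp
            (isOpenMap_smul₀ (by norm_num : (1 / 2 : ℝ) ≠ 0))
        exact hopen _ hUo
      · exact ⟨0, hU0, by simp⟩
    · intro hx₀
      refine ⟨interior_subset hx₀, fun x => ?_⟩
      have hc : Continuous fun ρ : ℝ => x₀ + ρ • x :=
        continuous_const.add (continuous_id.smul continuous_const)
      have hopen : IsOpen ((fun ρ : ℝ => x₀ + ρ • x) ⁻¹' interior V) :=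
        isOpen_interior.preimage hc
      have h0 : (0 : ℝ) ∈ (fun ρ : ℝ => x₀ + ρ • x) ⁻¹' interior V := by
        simp [hx₀]
      obtain ⟨ε, hε, hball⟩ := Metric.isOpen_iff.mp hopen 0 h0
      refine ⟨ε, hε, fun ρ _ hρ => interior_subset (hball ?_)⟩
      rw [Metric.mem_ball, Real.dist_eq, sub_zero]
      exact abs_lt.mpr ⟨hρ.1, hρ.2⟩
  rw [key]
  exact isOpen_interior
end

section
/- Let X be a real linear Polish space and V ⊆ X a D-measurable, midpoint convex set symmetric about the origin for which 0 is a ℚ₂-internal point. Then V is a neighborhood of 0 (i.e. 0 is an interior point of V). -/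
open Set Pointwise MeasureTheory

open Topology Filter TopologicalSpace

section Aux

/-- A nonempty open set is not meager in a Baire space. -/
lemma aux_not_isMeagre_of_isOpen {Y : Type*} [TopologicalSpace Y] [BaireSpace Y]
    {W : Set Y} (hWo : IsOpen W) (hWne : W.Nonempty) : ¬ IsMeagre W := by
  intro h
  obtain ⟨y, hy1, hy2⟩ := (dense_of_mem_residual h).inter_open_nonempty W hWo hWne
  exact hy2 hy1

lemma aux_isMeagre_union {Y : Type*} [TopologicalSpace Y] {s t : Set Y}
    (hs : IsMeagre s) (ht : IsMeagre t) : IsMeagre (s ∪ t) := by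
  rw [IsMeagre, compl_union]
  exact Filter.inter_mem hs ht

variable {X Y : Type*} [TopologicalSpace X] [TopologicalSpace Y]

/-- Sections of a dense open subset of a product are residually dense
(one half of the proof of the Kuratowski–Ulam theorem). -/
lemma aux_dense_section_residual [SecondCountableTopology Y] {W : Set (X × Y)}
    (hWo : IsOpen W) (hWd : Dense W) :
    {x : X | Dense (Prod.mk x ⁻¹' W)} ∈ residual X := by
  have key : ∀ V ∈ countableBasis Y,
      {x : X | ((Prod.mk x ⁻¹' W) ∩ V).Nonempty} ∈ residual X := by
    intro V hV
    have hVo : IsOpen V := (isBasis_countableBasis Y).isOpen hV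
    have hVne : V.Nonempty := nonempty_iff_ne_empty.2 <| by
      rintro rfl; exact empty_notMem_countableBasis Y hV
    apply residual_of_dense_open
    · have : {x : X | ((Prod.mk x ⁻¹' W) ∩ V).Nonempty}
          = Prod.fst '' (W ∩ (univ ×ˢ V)) := by
        ext x
        constructor
        · rintro ⟨y, hyW, hyV⟩
          exact ⟨(x, y), ⟨hyW, ⟨mem_univ _, hyV⟩⟩, rfl⟩
        · rintro ⟨⟨x', y⟩, ⟨hW, ⟨-, hV'⟩⟩, rfl⟩
          exact ⟨y, hW, hV'⟩
      rw [this]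
      exact isOpenMap_fst _ (hWo.inter (isOpen_univ.prod hVo))
    · rw [dense_iff_inter_open]
      intro G hGo hGne
      obtain ⟨p, hpGV, hpW⟩ :=
        hWd.inter_open_nonempty (G ×ˢ V) (hGo.prod hVo) (hGne.prod hVne)
      exact ⟨p.1, hpGV.1, ⟨p.2, hpW, hpGV.2⟩⟩
  have hR : (⋂ V ∈ countableBasis Y, {x : X | ((Prod.mk x ⁻¹' W) ∩ V).Nonempty})
      ∈ residual X := (countable_bInter_mem (countable_countableBasis Y)).2 key
  filter_upwards [hR] with x hx
  rw [dense_iff_inter_open]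
  intro U hUo hUne
  obtain ⟨y, hyU⟩ := hUne
  obtain ⟨V, hVb, hyV, hVU⟩ :=
    (isBasis_countableBasis Y).exists_subset_of_mem_open hyU hUo
  simp only [mem_iInter, mem_setOf_eq] at hx
  obtain ⟨z, hzW, hzV⟩ := hx V hVb
  exact ⟨z, hVU hzV, hzW⟩

/-- Sections of a meager subset of a product are residually meager
(the "easy" direction of Kuratowski–Ulam). -/
lemma aux_ku_meager_sections [SecondCountableTopology Y] {E : Set (X × Y)}
    (hE : IsMeagre E) :
    {x : X | IsMeagre (Prod.mk x ⁻¹' E)} ∈ residual X := by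
  obtain ⟨S, hSo, hSd, hSc, hSsub⟩ := mem_residual_iff.1 hE
  have hR : (⋂ W ∈ S, {x : X | Dense (Prod.mk x ⁻¹' W)}) ∈ residual X :=
    (countable_bInter_mem hSc).2 fun W hW =>
      aux_dense_section_residual (hSo W hW) (hSd W hW)
  filter_upwards [hR] with x hx
  simp only [mem_iInter, mem_setOf_eq] at hx
  rw [IsMeagre, mem_residual_iff]
  refine ⟨(fun W => Prod.mk x ⁻¹' W) '' S, ?_, ?_, hSc.image _, ?_⟩
  · rintro t ⟨W, hW, rfl⟩
    exact (hSo W hW).preimage (Continuous.prodMk_right x)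
  · rintro t ⟨W, hW, rfl⟩
    exact hx W hW
  · intro y hy
    simp only [sInter_image, mem_iInter] at hy
    have : (x, y) ∈ ⋂₀ S := by
      intro W hW
      exact hy W hW
    exact hSsub this

/-- The "hard" direction of Kuratowski–Ulam for Baire measurable sets: if every
section of a Baire measurable set is meager, the set itself is meager. -/
lemma aux_ku_converse [BaireSpace X] [BaireSpace Y] [SecondCountableTopology Y]
    {E : Set (X × Y)} (hE : BaireMeasurableSet E)
    (h : ∀ x : X, IsMeagre (Prod.mk x ⁻¹' E)) : IsMeagre E := by
  obtain ⟨U, hUo, hEU⟩ := hE.residualEq_isOpen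
  have hD : {p : X × Y | p ∈ E ↔ p ∈ U} ∈ residual _ := by
    have := Filter.eventuallyEq_set.1 hEU
    exact this
  have hMm : IsMeagre {p : X × Y | p ∈ E ↔ p ∈ U}ᶜ := by
    rw [IsMeagre, compl_compl]; exact hD
  have hR := aux_ku_meager_sections hMm
  have hU : U = ∅ := by
    by_contra hne
    obtain ⟨⟨x₀, y₀⟩, hp⟩ := nonempty_iff_ne_empty.2 hne
    obtain ⟨G, V, hGo, hVo, hxG, hyV, hsub⟩ := isOpen_prod_iff.1 hUo x₀ y₀ hp
    obtain ⟨x, hxG', hxR⟩ :=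
      (dense_of_mem_residual hR).inter_open_nonempty G hGo ⟨x₀, hxG⟩
    have hUx : Prod.mk x ⁻¹' U ⊆
        (Prod.mk x ⁻¹' E) ∪ (Prod.mk x ⁻¹' {p : X × Y | p ∈ E ↔ p ∈ U}ᶜ) := by
      intro y hy
      by_cases hD' : (x, y) ∈ E
      · exact Or.inl hD'
      · exact Or.inr fun hiff => hD' (hiff.2 hy)
    have hmeag : IsMeagre (Prod.mk x ⁻¹' U) :=
      (aux_isMeagre_union (h x) hxR).mono hUx
    have hVsub : V ⊆ Prod.mk x ⁻¹' U := fun y hy => hsub ⟨hxG', hy⟩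
    exact aux_not_isMeagre_of_isOpen (hUo.preimage (Continuous.prodMk_right x))
      ⟨y₀, hVsub hyV⟩ hmeag
  refine hMm.mono fun p hpE => ?_
  intro hiff
  have : p ∈ U := hiff.1 hpE
  rw [hU] at this
  exact this

end Aux

/-- Darji's theorem: Haar meager sets in a Polish topological group are meager. -/
lemma aux_haarMeager_isMeagre {X : Type*} [AddCommGroup X] [TopologicalSpace X]
    [IsTopologicalAddGroup X] [PolishSpace X] {A : Set X} (hA : HaarMeager A) :
    IsMeagre A := by
  obtain ⟨B, hAB, hBm, K, _, _, _, f, hfc, hmeag⟩ := hA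
  letI := upgradeIsCompletelyMetrizable X
  set E : Set (X × K) := {p | f p.2 + p.1 ∈ B} with hE
  have hEbm : BaireMeasurableSet E := by
    borelize X
    borelize (X × K)
    have hg : Continuous fun p : X × K => f p.2 + p.1 :=
      (hfc.comp continuous_snd).add continuous_fst
    exact (hg.measurable hBm).baireMeasurableSet
  have hsec : ∀ x : X, IsMeagre (Prod.mk x ⁻¹' E) := by
    intro x
    have : Prod.mk x ⁻¹' E = f ⁻¹' (B + {-x}) := by
      ext k
      simp only [hE, mem_preimage, mem_setOf_eq, Set.add_singleton, mem_image]
      constructor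
      · intro hk
        exact ⟨f k + x, hk, by abel⟩
      · rintro ⟨b, hb, hbe⟩
        have : b = f k + x := by
          have := hbe; linear_combination (norm := abel) this
        rwa [this] at hb
    rw [this]
    exact hmeag (-x)
  have hEm : IsMeagre E := aux_ku_converse hEbm hsec
  have hE'm : IsMeagre (Prod.swap ⁻¹' E : Set (K × X)) :=
    hEm.preimage_of_isOpenMap continuous_swap (Homeomorph.prodComm K X).isOpenMap
  have hres := aux_ku_meager_sections hE'm
  obtain ⟨k, hk⟩ := (dense_of_mem_residual hres).nonempty
  have hkm : IsMeagre {x : X | f k + x ∈ B} := hk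
  have hBm' : IsMeagre B := by
    have hBeq : B = (fun y : X => y - f k) ⁻¹' {x : X | f k + x ∈ B} := by
      ext y
      simp [add_sub_cancel]
    rw [hBeq]
    exact hkm.preimage_of_isOpenMap (continuous_id.sub continuous_const)
      (Homeomorph.subRight (f k)).isOpenMap
  exact hBm'.mono hAB

/-- The Pettis theorem: a non-meager Baire measurable set `A` in a topological
group which is a Baire space satisfies `0 ∈ int (A - A)`. -/
lemma aux_pettis {G : Type*} [AddCommGroup G] [TopologicalSpace G]
    [IsTopologicalAddGroup G] [BaireSpace G] {A : Set G}
    (hA : BaireMeasurableSet A) (hnm : ¬ IsMeagre A) : A - A ∈ nhds (0 : G) := by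
  obtain ⟨U, hUo, hAU⟩ := hA.residualEq_isOpen
  have hD : {p : G | p ∈ A ↔ p ∈ U} ∈ residual G := Filter.eventuallyEq_set.1 hAU
  set M := {p : G | p ∈ A ↔ p ∈ U}ᶜ with hMdef
  have hMm : IsMeagre M := by rw [IsMeagre, hMdef, compl_compl]; exact hD
  have hUA : U \ M ⊆ A := by
    rintro y ⟨hyU, hyM⟩
    have hiff : y ∈ A ↔ y ∈ U := not_not.1 hyM
    exact hiff.2 hyU
  have hUne : U.Nonempty := by
    rcases U.eq_empty_or_nonempty with rfl | h
    · refine absurd (hMm.mono fun a ha => ?_) hnm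
      intro hiff
      exact (hiff.1 ha)
    · exact h
  have hsub : U - U ⊆ A - A := by
    rintro z ⟨u₁, hu₁, u₂, hu₂, rfl⟩
    set g : G → G := fun y => y - (u₁ - u₂) with hg
    have hgc : Continuous g := continuous_id.sub continuous_const
    set W := U ∩ g ⁻¹' U with hW
    have hWo : IsOpen W := hUo.inter (hUo.preimage hgc)
    have hWne : W.Nonempty := ⟨u₁, hu₁, by simp [hg, hu₂]⟩
    have hM2 : IsMeagre (M ∪ g ⁻¹' M) :=
      aux_isMeagre_union hMm
        (hMm.preimage_of_isOpenMap hgc (Homeomorph.subRight (u₁ - u₂)).isOpenMap)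
    obtain ⟨y, hyW, hyM⟩ : (W \ (M ∪ g ⁻¹' M)).Nonempty := by
      by_contra hempty
      rw [not_nonempty_iff_eq_empty, diff_eq_empty] at hempty
      exact aux_not_isMeagre_of_isOpen hWo hWne (hM2.mono hempty)
    have hyA : y ∈ A := hUA ⟨hyW.1, fun hy => hyM (Or.inl hy)⟩
    have hyA' : g y ∈ A := hUA ⟨hyW.2, fun hy => hyM (Or.inr hy)⟩
    exact ⟨y, hyA, g y, hyA', by simp [hg]⟩
  obtain ⟨u, hu⟩ := hUne
  have hnhd : (fun y : G => y + u) ⁻¹' U ∈ nhds (0 : G) :=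
    (hUo.preimage (continuous_id.add continuous_const)).mem_nhds (by simpa using hu)
  refine Filter.mem_of_superset hnhd fun y hy => ?_
  exact hsub ⟨y + u, hy, u, hu, add_sub_cancel_right y u⟩

theorem mem_nhds_zero_of_q2Internal
    (X : Type*) [AddCommGroup X] [Module ℝ X] [TopologicalSpace X]
    [IsTopologicalAddGroup X] [ContinuousSMul ℝ X] [PolishSpace X]
    (V : Set X) (hV : DMeasurable V)
    (hmid : ∀ v₁ ∈ V, ∀ v₂ ∈ V, (1 / 2 : ℝ) • (v₁ + v₂) ∈ V)
    (hsym : V = -V) (h0 : Q2Internal V 0) :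
    V ∈ nhds (0 : X) := by
  obtain ⟨B, M, hB, hM, hVBM⟩ := hV
  letI := upgradeIsCompletelyMetrizable X
  have hMm : IsMeagre M := aux_haarMeager_isMeagre hM
  have hVbm : BaireMeasurableSet V := by
    rw [hVBM]
    refine BaireMeasurableSet.union ?_ hMm.baireMeasurableSet
    borelize X
    exact hB.baireMeasurableSet
  -- `V` is non-meager, since `X` is a countable union of dilates of `V`.
  have hVnm : ¬ IsMeagre V := by
    intro hmV
    have hcover : (univ : Set X) ⊆
        ⋃ m : ℕ, (fun x : X => ((2 : ℝ) ^ m)⁻¹ • x) ⁻¹' V := by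
      intro x _
      obtain ⟨ε, hε, hρ⟩ := h0.2 x
      obtain ⟨m, hm2⟩ : ∃ m : ℕ, ((2 : ℝ) ^ m)⁻¹ < ε := by
        obtain ⟨m, hm'⟩ := pow_unbounded_of_one_lt (ε⁻¹) (one_lt_two (α := ℝ))
        refine ⟨m, ?_⟩
        rw [inv_lt_comm₀ (by positivity) hε]
        exact hm'
      refine mem_iUnion.2 ⟨m, ?_⟩
      have hQ2 : ((2 : ℝ) ^ m)⁻¹ ∈ Q2 := by
        refine ⟨1, m, ?_⟩
        push_cast
        rw [zpow_natCast, one_div]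
      have hpos : (0 : ℝ) < ((2 : ℝ) ^ m)⁻¹ := by positivity
      have := hρ (((2 : ℝ) ^ m)⁻¹) hQ2 ⟨lt_trans (neg_neg_of_pos hε) hpos, hm2⟩
      simpa using this
    have hdil : ∀ m : ℕ, IsMeagre ((fun x : X => ((2 : ℝ) ^ m)⁻¹ • x) ⁻¹' V) := by
      intro m
      have hne : ((2 : ℝ) ^ m)⁻¹ ≠ 0 := by positivity
      exact hmV.preimage_of_isOpenMap (continuous_const_smul _)
        (Homeomorph.smulOfNeZero _ hne).isOpenMap
    have huniv : IsMeagre (univ : Set X) :=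
      (isMeagre_iUnion hdil).mono hcover
    obtain ⟨y, hy1, hy2⟩ :=
      (dense_of_mem_residual huniv).inter_open_nonempty univ isOpen_univ ⟨0, trivial⟩
    exact hy2 trivial
  have hN : V - V ∈ nhds (0 : X) := aux_pettis hVbm hVnm
  have h2 : (fun x : X => (2 : ℝ) • x) ⁻¹' (V - V) ∈ nhds (0 : X) := by
    refine (continuous_const_smul (2 : ℝ)).continuousAt.preimage_mem_nhds ?_
    simpa using hN
  refine Filter.mem_of_superset h2 fun x hx => ?_
  rw [mem_preimage, Set.mem_sub] at hx
  obtain ⟨v₁, h₁, v₂, h₂, heq⟩ := hx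
  have h₂' : -v₂ ∈ V := by
    rw [hsym] at h₂
    exact Set.mem_neg.1 h₂
  have hmem := hmid v₁ h₁ (-v₂) h₂'
  have hx2 : x = (1 / 2 : ℝ) • (v₁ + -v₂) := by
    rw [← sub_eq_add_neg, heq, smul_smul]
    norm_num
  rwa [← hx2] at hmem
end
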